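/- arXiv:1603.09068 — 4 statements merged into one kernel-verified Lean document; each statement's English description precedes it below -/
import Mathlib

section
/- For every nonnegative integer n and every positive integer r, the coefficient of x^n in the formal power series x^{r²} / ((1−x)(1−x²)⋯(1−x^r)) equals the number of partitions of n into exactly r parts n = n1 + n2 + ... + nr with n1 > n2 > ... > nr ≥ 1 and n_i − n_{i+1} ≥ 2 for all 1 ≤ i ≤ r−1. -/
open PowerSeries

namespace RRaux

open Finset

/-- The geometric-type series `∑ x^{js}` (indicator of multiples of `s`). -/
noncomputable def G (s : ℕ) : PowerSeries ℚ :=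
  PowerSeries.mk fun m => if s ∣ m then 1 else 0

lemma coeff_G (s m : ℕ) : (PowerSeries.coeff (R := ℚ) m) (G s) = if s ∣ m then 1 else 0 :=
  PowerSeries.coeff_mk _ _

lemma G_eq_inv (s : ℕ) (hs : 1 ≤ s) :
    (1 - (PowerSeries.X : PowerSeries ℚ) ^ s)⁻¹ = G s := by
  rw [PowerSeries.inv_eq_iff_mul_eq_one]
  · ext n
    rw [mul_sub, mul_one, map_sub, PowerSeries.coeff_mul_X_pow', coeff_G]
    rcases Nat.eq_zero_or_pos n with rfl | hn
    · rw [if_pos (dvd_zero s), if_neg (by omega), sub_zero, PowerSeries.coeff_one, if_pos rfl]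
    · rw [PowerSeries.coeff_one, if_neg hn.ne']
      by_cases hle : s ≤ n
      · rw [if_pos hle, coeff_G]
        have : s ∣ n ↔ s ∣ n - s := by
          constructor
          · intro h; exact (Nat.dvd_sub h dvd_rfl)
          · intro h; have := Nat.dvd_add h (dvd_refl s); rwa [Nat.sub_add_cancel hle] at this
        by_cases hd : s ∣ n
        · rw [if_pos hd, if_pos (this.1 hd)]; ring
        · rw [if_neg hd, if_neg (fun hh => hd (this.2 hh))]; ring
      · rw [if_neg hle, if_neg, sub_zero]
        intro hd
        exact hle (Nat.le_of_dvd hn hd)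
  · simp only [map_sub, map_one, map_pow, PowerSeries.constantCoeff_X]
    rw [zero_pow (by omega), sub_zero]
    exact one_ne_zero

/-- The set of solutions to `∑ (k+1) * g k = m`. -/
noncomputable def A (r m : ℕ) : Finset (Fin r → ℕ) :=
  (Fintype.piFinset fun _ => Finset.range (m + 1)).filter
    fun g => ∑ k : Fin r, ((k : ℕ) + 1) * g k = m

lemma mem_A {r m : ℕ} {g : Fin r → ℕ} :
    g ∈ A r m ↔ ∑ k : Fin r, ((k : ℕ) + 1) * g k = m := by
  constructor
  · intro h; exact (Finset.mem_filter.1 h).2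
  · intro h
    refine Finset.mem_filter.2 ⟨Fintype.mem_piFinset.2 fun k => ?_, h⟩
    rw [Finset.mem_range]
    have h1 : ((k : ℕ) + 1) * g k ≤ m := by
      rw [← h]
      exact Finset.single_le_sum (f := fun k : Fin r => ((k : ℕ) + 1) * g k)
        (fun i _ => Nat.zero_le _) (Finset.mem_univ k)
    have h2 : g k ≤ ((k : ℕ) + 1) * g k := Nat.le_mul_of_pos_left _ (Nat.succ_pos _)
    omega

lemma card_A_succ (r m : ℕ) :
    (A (r + 1) m).card =
      ∑ p ∈ Finset.HasAntidiagonal.antidiagonal m, if r + 1 ∣ p.2 then (A r p.1).card else 0 := by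
  have hmem : ∀ g ∈ A (r + 1) m,
      ((m - (r + 1) * g (Fin.last r), (r + 1) * g (Fin.last r)) : ℕ × ℕ) ∈
        Finset.HasAntidiagonal.antidiagonal m := by
    intro g hg
    have hsum := mem_A.1 hg
    have hle : (r + 1) * g (Fin.last r) ≤ m := by
      rw [← hsum]
      have := Finset.single_le_sum (f := fun k : Fin (r + 1) => ((k : ℕ) + 1) * g k)
        (fun i _ => Nat.zero_le _) (Finset.mem_univ (Fin.last r))
      simpa using this
    rw [Finset.HasAntidiagonal.mem_antidiagonal]
    omega
  rw [Finset.card_eq_sum_card_fiberwise hmem]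
  refine Finset.sum_congr rfl fun p hp => ?_
  rw [Finset.HasAntidiagonal.mem_antidiagonal] at hp
  by_cases hd : r + 1 ∣ p.2
  · rw [if_pos hd]
    obtain ⟨j, hj⟩ := hd
    refine Finset.card_bij' (fun g _ => Fin.init g) (fun h _ => Fin.snoc h j)
      ?_ ?_ ?_ ?_
    · intro g hg
      obtain ⟨hgA, hgF⟩ := Finset.mem_filter.1 hg
      have hsum := mem_A.1 hgA
      rw [Fin.sum_univ_castSucc] at hsum
      have h2 : (r + 1) * g (Fin.last r) = p.2 := congrArg Prod.snd hgF
      refine mem_A.2 ?_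
      have : (∑ k : Fin r, (((Fin.castSucc k) : ℕ) + 1) * g (Fin.castSucc k)) = p.1 := by
        simp only [Fin.val_last] at hsum
        omega
      simpa [Fin.init] using this
    · intro h hh
      have hsum := mem_A.1 hh
      refine Finset.mem_filter.2 ⟨mem_A.2 ?_, ?_⟩
      · rw [Fin.sum_univ_castSucc]
        simp only [Fin.snoc_castSucc, Fin.snoc_last, Fin.val_last, Fin.coe_castSucc]
        rw [hsum]
        omega
      · simp only [Fin.snoc_last]
        have h1 : m - (r + 1) * j = p.1 := by omega
        rw [Prod.ext_iff]
        exact ⟨h1, hj.symm⟩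
    · intro g hg
      obtain ⟨hgA, hgF⟩ := Finset.mem_filter.1 hg
      have h2 : (r + 1) * g (Fin.last r) = p.2 := congrArg Prod.snd hgF
      have hgl : g (Fin.last r) = j :=
        Nat.eq_of_mul_eq_mul_left (Nat.succ_pos r) (h2.trans hj)
      refine funext fun x => ?_
      rw [← hgl, Fin.snoc_init_self]
    · intro h hh
      refine funext fun x => ?_
      simp [Fin.init, Fin.snoc_castSucc]
  · rw [if_neg hd]
    rw [Finset.card_eq_zero, Finset.filter_eq_empty_iff]
    intro g hg hF
    exact hd ⟨g (Fin.last r), (congrArg Prod.snd hF).symm⟩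

lemma coeff_prod_G (r : ℕ) : ∀ m : ℕ,
    (PowerSeries.coeff (R := ℚ) m) (∏ k ∈ Finset.range r, G (k + 1)) = ((A r m).card : ℚ) := by
  induction r with
  | zero =>
    intro m
    rw [Finset.prod_range_zero, PowerSeries.coeff_one]
    rcases Nat.eq_zero_or_pos m with rfl | hm
    · rw [if_pos rfl]
      have : (A 0 0).card = 1 := by
        rw [Finset.card_eq_one]
        refine ⟨fun k => Fin.elim0 k, ?_⟩
        ext g
        simp only [Finset.mem_singleton]
        constructor
        · intro _; funext k; exact Fin.elim0 k
        · intro h; subst h; exact mem_A.2 (by simp)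
      rw [this]; norm_num
    · rw [if_neg hm.ne']
      have : (A 0 m).card = 0 := by
        rw [Finset.card_eq_zero, Finset.eq_empty_iff_forall_notMem]
        intro g hg
        have := mem_A.1 hg
        simp at this
        omega
      rw [this]; norm_num
  | succ r ih =>
    intro m
    rw [Finset.prod_range_succ, PowerSeries.coeff_mul, card_A_succ]
    push_cast
    refine Finset.sum_congr rfl fun p _ => ?_
    rw [ih p.1, coeff_G]
    by_cases hd : r + 1 ∣ p.2
    · rw [if_pos hd, if_pos hd, mul_one]
    · rw [if_neg hd, if_neg hd, mul_zero]

lemma coeff_main (r m : ℕ) :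
    (PowerSeries.coeff (R := ℚ) m)
        (∏ k ∈ Finset.range r, (1 - (PowerSeries.X : PowerSeries ℚ) ^ (k + 1))⁻¹) =
      ((A r m).card : ℚ) := by
  rw [Finset.prod_congr rfl fun k _ => G_eq_inv (k + 1) (by omega)]
  exact coeff_prod_G r m

/-! ### The combinatorial bijection -/

/-- Partial sums of `g` from index `i` on. -/
def S (r : ℕ) (g : Fin r → ℕ) (i : ℕ) : ℕ :=
  ∑ k : Fin r, if i ≤ (k : ℕ) then g k else 0

lemma S_of_ge {r : ℕ} (g : Fin r → ℕ) {i : ℕ} (h : r ≤ i) : S r g i = 0 := by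
  refine Finset.sum_eq_zero fun k _ => ?_
  rw [if_neg]; omega

lemma S_succ {r : ℕ} (g : Fin r → ℕ) {i : ℕ} (h : i < r) :
    S r g i = g ⟨i, h⟩ + S r g (i + 1) := by
  unfold S
  have : ∀ k : Fin r, (if i ≤ (k : ℕ) then g k else 0) =
      (if (⟨i, h⟩ : Fin r) = k then g k else 0) + (if i + 1 ≤ (k : ℕ) then g k else 0) := by
    intro k
    rcases Nat.lt_trichotomy i (k : ℕ) with hlt | heq | hgt
    · rw [if_pos (by omega), if_neg (by simp only [Fin.ext_iff]; omega), if_pos (by omega)]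
      try omega
    · rw [if_pos (by omega), if_pos (by simp only [Fin.ext_iff]; omega), if_neg (by omega)]
      try omega
    · rw [if_neg (by omega), if_neg (by simp only [Fin.ext_iff]; omega), if_neg (by omega)]
      try omega
  rw [Finset.sum_congr rfl fun k _ => this k, Finset.sum_add_distrib, Finset.sum_ite_eq]
  simp

lemma sum_S {r : ℕ} (g : Fin r → ℕ) :
    ∑ i : Fin r, S r g (i : ℕ) = ∑ k : Fin r, ((k : ℕ) + 1) * g k := by
  unfold S
  rw [Finset.sum_comm]
  refine Finset.sum_congr rfl fun k _ => ?_
  rw [Fin.sum_univ_eq_sum_range (fun i => if i ≤ (k : ℕ) then g k else 0) r]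
  rw [← Finset.sum_filter]
  have hfil : (Finset.range r).filter (fun i => i ≤ (k : ℕ)) = Finset.range ((k : ℕ) + 1) := by
    ext i
    simp only [Finset.mem_filter, Finset.mem_range]
    have := k.2
    omega
  rw [hfil, Finset.sum_const, Finset.card_range, smul_eq_mul]

lemma sum_sq : ∀ n : ℕ, ∑ j ∈ Finset.range n, (2 * j + 1) = n ^ 2 := by
  intro n
  induction n with
  | zero => simp
  | succ n ihn => rw [Finset.sum_range_succ, ihn]; ring

lemma sum_odd (r : ℕ) : ∑ i : Fin r, (2 * (r - (i : ℕ)) - 1) = r ^ 2 := by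
  rw [Fin.sum_univ_eq_sum_range (fun i => 2 * (r - i) - 1) r]
  have h1 : ∀ i ∈ Finset.range r, 2 * (r - i) - 1 = (fun j => 2 * j + 1) (r - 1 - i) := by
    intro i hi
    rw [Finset.mem_range] at hi
    simp only
    omega
  rw [Finset.sum_congr rfl h1, Finset.sum_range_reflect (fun j => 2 * j + 1) r,
    sum_sq r]

/-- Add the staircase to a solution of the weighted-sum equation. -/
def Phi (r : ℕ) (g : Fin r → ℕ) : Fin r → ℕ :=
  fun i => 2 * (r - (i : ℕ)) - 1 + S r g (i : ℕ)

/-- Remove the staircase from a gap-2 partition. -/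
def Psi (r : ℕ) (f : Fin r → ℕ) : Fin r → ℕ :=
  fun k => f k - (if h : (k : ℕ) + 1 < r then f ⟨(k : ℕ) + 1, h⟩ + 2 else 1)

lemma Phi_sum {r : ℕ} (g : Fin r → ℕ) :
    ∑ i, Phi r g i = r ^ 2 + ∑ k : Fin r, ((k : ℕ) + 1) * g k := by
  unfold Phi
  rw [Finset.sum_add_distrib, sum_odd, sum_S]

lemma Phi_pos {r : ℕ} (g : Fin r → ℕ) (i : Fin r) : 1 ≤ Phi r g i := by
  unfold Phi
  have := i.2
  omega

lemma Phi_gap {r : ℕ} (g : Fin r → ℕ) (i : Fin r) (h : (i : ℕ) + 1 < r) :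
    Phi r g ⟨(i : ℕ) + 1, h⟩ + 2 ≤ Phi r g i := by
  unfold Phi
  simp only
  have hS := S_succ g (i.2 : (i : ℕ) < r)
  have := i.2
  omega

lemma Psi_Phi {r : ℕ} (g : Fin r → ℕ) : Psi r (Phi r g) = g := by
  funext k
  unfold Psi
  by_cases h : (k : ℕ) + 1 < r
  · rw [dif_pos h]
    unfold Phi
    simp only
    have hS := S_succ g (k.2 : (k : ℕ) < r)
    have hk : (⟨(k : ℕ), k.2⟩ : Fin r) = k := rfl
    rw [hk] at hS
    omega
  · rw [dif_neg h]
    unfold Phi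
    have hk1 : (k : ℕ) + 1 = r := by have := k.2; omega
    have hS := S_succ g (k.2 : (k : ℕ) < r)
    have hS2 : S r g ((k : ℕ) + 1) = 0 := S_of_ge g (by omega)
    have hk : (⟨(k : ℕ), k.2⟩ : Fin r) = k := rfl
    rw [hk] at hS
    omega

lemma Phi_Psi_key {r : ℕ} (f : Fin r → ℕ) (h1 : ∀ i : Fin r, 1 ≤ f i)
    (h2 : ∀ i : Fin r, ∀ h : (i : ℕ) + 1 < r, f ⟨(i : ℕ) + 1, h⟩ + 2 ≤ f i) :
    ∀ d : ℕ, ∀ i : ℕ, ∀ h : i + d + 1 = r,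
      2 * (r - i) - 1 + S r (Psi r f) i = f ⟨i, by omega⟩ := by
  intro d
  induction d with
  | zero =>
    intro i h
    have hi : i < r := by omega
    have hS := S_succ (Psi r f) hi
    have hS2 : S r (Psi r f) (i + 1) = 0 := S_of_ge _ (by omega)
    have hP : Psi r f ⟨i, hi⟩ = f ⟨i, hi⟩ - 1 := by
      unfold Psi
      rw [dif_neg (by simp; omega)]
    have hpos := h1 ⟨i, hi⟩
    omega
  | succ d ihd =>
    intro i h
    have hi : i < r := by omega
    have hi1 : i + 1 < r := by omega
    have hS := S_succ (Psi r f) hi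
    have hIH := ihd (i + 1) (by omega)
    have hP : Psi r f ⟨i, hi⟩ = f ⟨i, hi⟩ - (f ⟨i + 1, hi1⟩ + 2) := by
      unfold Psi
      rw [dif_pos (by simpa using hi1)]
    have hgap := h2 ⟨i, hi⟩ (by simpa using hi1)
    simp only at hgap
    omega

lemma Phi_Psi {r : ℕ} (f : Fin r → ℕ) (h1 : ∀ i : Fin r, 1 ≤ f i)
    (h2 : ∀ i : Fin r, ∀ h : (i : ℕ) + 1 < r, f ⟨(i : ℕ) + 1, h⟩ + 2 ≤ f i) :
    Phi r (Psi r f) = f := by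
  funext i
  unfold Phi
  have hkey := Phi_Psi_key f h1 h2 (r - 1 - (i : ℕ)) (i : ℕ) (by have := i.2; omega)
  have hk : (⟨(i : ℕ), by have := i.2; omega⟩ : Fin r) = i := rfl
  rw [hk] at hkey
  exact hkey

lemma sum_f_eq {r : ℕ} (f : Fin r → ℕ) (h1 : ∀ i : Fin r, 1 ≤ f i)
    (h2 : ∀ i : Fin r, ∀ h : (i : ℕ) + 1 < r, f ⟨(i : ℕ) + 1, h⟩ + 2 ≤ f i) :
    ∑ i, f i = r ^ 2 + ∑ k : Fin r, ((k : ℕ) + 1) * Psi r f k := by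
  conv_lhs => rw [← Phi_Psi f h1 h2]
  exact Phi_sum (Psi r f)

end RRaux

/-- The coefficient of `x^n` in `x^(r²) / ((1−x)(1−x²)⋯(1−x^r))` equals the
number of partitions of `n` into exactly `r` parts `n₁ > n₂ > ... > n_r ≥ 1`
with consecutive differences at least `2`. -/
theorem rr_coefficient (r n : ℕ) (hr : 1 ≤ r) :
    (PowerSeries.coeff (R := ℚ) n)
        ((PowerSeries.X : PowerSeries ℚ) ^ (r ^ 2) *
          ∏ k ∈ Finset.range r, (1 - (PowerSeries.X : PowerSeries ℚ) ^ (k + 1))⁻¹) =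
      (Nat.card {f : Fin r → ℕ //
          (∀ i : Fin r, 1 ≤ f i) ∧
          (∀ i : Fin r, ∀ h : (i : ℕ) + 1 < r, f ⟨(i : ℕ) + 1, h⟩ + 2 ≤ f i) ∧
          ∑ i, f i = n} : ℚ) := by
  classical
  rw [PowerSeries.coeff_X_pow_mul']
  by_cases hle : r ^ 2 ≤ n
  · rw [if_pos hle, RRaux.coeff_main]
    congr 1
    have e : {f : Fin r → ℕ //
          (∀ i : Fin r, 1 ≤ f i) ∧
          (∀ i : Fin r, ∀ h : (i : ℕ) + 1 < r, f ⟨(i : ℕ) + 1, h⟩ + 2 ≤ f i) ∧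
          ∑ i, f i = n} ≃ {g // g ∈ RRaux.A r (n - r ^ 2)} := by
      refine ⟨fun f => ⟨RRaux.Psi r f.1, ?_⟩, fun g => ⟨RRaux.Phi r g.1, ?_, ?_, ?_⟩, ?_, ?_⟩
      · obtain ⟨h1, h2, h3⟩ := f.2
        refine RRaux.mem_A.2 ?_
        have := RRaux.sum_f_eq f.1 h1 h2
        omega
      · exact fun i => RRaux.Phi_pos g.1 i
      · exact fun i h => RRaux.Phi_gap g.1 i h
      · have := RRaux.Phi_sum g.1
        have hg := RRaux.mem_A.1 g.2
        omega
      · intro f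
        exact Subtype.ext (RRaux.Phi_Psi f.1 f.2.1 f.2.2.1)
      · intro g
        exact Subtype.ext (RRaux.Psi_Phi g.1)
    rw [Nat.card_congr e, Nat.card_eq_finsetCard]
  · rw [if_neg hle]
    have hempty : IsEmpty {f : Fin r → ℕ //
          (∀ i : Fin r, 1 ≤ f i) ∧
          (∀ i : Fin r, ∀ h : (i : ℕ) + 1 < r, f ⟨(i : ℕ) + 1, h⟩ + 2 ≤ f i) ∧
          ∑ i, f i = n} := by
      refine ⟨fun f => ?_⟩
      obtain ⟨h1, h2, h3⟩ := f.2
      have := RRaux.sum_f_eq f.1 h1 h2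
      omega
    rw [Nat.card_of_isEmpty]
    norm_num
end

section
/- For every positive integer c, every nonnegative integer n, and every positive integer r, the coefficient of x^n in c^r · x^{r²} / ((1−x)(1−x²)⋯(1−x^r)) equals the number of pairs consisting of a partition of n into r parts with all consecutive differences at least 2 (and smallest part at least 1) together with a labeling of each of the r parts by an element of {1, 2, ..., c}. Consequently, Σ_{r≥0} c^r x^{r²}/((x;x)_r) is the generating function counting such c-colored gap-2 partitions (with the empty partition counted once for r = 0). -/
open PowerSeries Finset

private lemma geom_inv (k : ℕ) (hk : 0 < k) :
    (1 - (X : ℚ⟦X⟧) ^ k)⁻¹ = PowerSeries.mk (fun m => if k ∣ m then 1 else 0) := by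
  rw [PowerSeries.inv_eq_iff_mul_eq_one]
  · ext m
    rw [mul_sub, mul_one, map_sub, PowerSeries.coeff_mul_X_pow', coeff_one, coeff_mk]
    by_cases hkm : k ≤ m
    · rw [if_pos hkm, coeff_mk, if_neg (by omega : ¬ m = 0)]
      by_cases hd : k ∣ m
      · rw [if_pos hd, if_pos (Nat.dvd_sub hd dvd_rfl), sub_self]
      · rw [if_neg hd, if_neg (fun h => hd (by
          have : m = (m - k) + k := by omega
          rw [this]; exact Nat.dvd_add h dvd_rfl)), sub_self]
    · rw [if_neg hkm, sub_zero]
      by_cases hm : m = 0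
      · simp [hm]
      · rw [if_neg hm, if_neg (fun h => hkm (Nat.le_of_dvd (by omega) h))]
  · simp [constantCoeff_X, hk.ne']

private lemma coeff_prod_inv (r m : ℕ) :
    (PowerSeries.coeff (R := ℚ) m) (∏ k ∈ Finset.range r, (1 - (X : ℚ⟦X⟧) ^ (k + 1))⁻¹) =
      (Nat.card {f : Fin r → ℕ // ∑ i : Fin r, ((i : ℕ) + 1) * f i = m} : ℚ) := by
  have h1 : ∀ k ∈ Finset.range r, (1 - (X : ℚ⟦X⟧) ^ (k + 1))⁻¹ =
      PowerSeries.mk (fun j => if (k + 1) ∣ j then (1:ℚ) else 0) :=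
    fun k _ => geom_inv (k+1) k.succ_pos
  have hsum : ∀ (g : Fin r → ℕ), ∑ k ∈ Finset.range r,
      (if h : k < r then ((k:ℕ)+1) * g ⟨k,h⟩ else 0) = ∑ i : Fin r, ((i : ℕ)+1) * g i := by
    intro g; rw [Finset.sum_fin_eq_sum_range]
  rw [Finset.prod_congr rfl h1, PowerSeries.coeff_prod]
  simp only [coeff_mk]
  rw [Finset.sum_congr rfl (fun l _ => Finset.prod_boole ..), Finset.sum_boole]
  congr 1
  rw [← Nat.card_eq_finsetCard]
  apply Nat.card_congr
  refine
    { toFun := fun l => ⟨fun i => l.1 i / ((i : ℕ) + 1), ?_⟩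
      invFun := fun f => ⟨Finsupp.onFinset (Finset.range r)
          (fun k => if h : k < r then (k + 1) * f.1 ⟨k, h⟩ else 0) ?_, ?_⟩
      left_inv := ?_
      right_inv := ?_ }
  · obtain ⟨l, hl⟩ := l
    rw [Finset.mem_filter, Finset.mem_finsuppAntidiag] at hl
    have : ∀ i : Fin r, ((i : ℕ) + 1) * (l i / ((i : ℕ) + 1)) = l i := by
      intro i
      exact Nat.mul_div_cancel' (hl.2 i (Finset.mem_range.2 i.2))
    rw [Finset.sum_congr rfl (fun i _ => this i), ← hl.1.1, Finset.sum_fin_eq_sum_range]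
    apply Finset.sum_congr rfl
    intro k hk
    rw [dif_pos (Finset.mem_range.1 hk)]
  · intro k hk
    simp only [Finset.mem_range]
    by_contra h
    simp [dif_neg h] at hk
  · obtain ⟨f, hf⟩ := f
    rw [Finset.mem_filter, Finset.mem_finsuppAntidiag]
    refine ⟨⟨?_, Finsupp.support_onFinset_subset⟩, ?_⟩
    · rw [show (Finset.range r).sum ⇑(Finsupp.onFinset (Finset.range r)
          (fun k => if h : k < r then (k + 1) * f ⟨k, h⟩ else 0) (by
            intro k hk
            simp only [Finset.mem_range]
            by_contra h
            simp [dif_neg h] at hk)) =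
          ∑ k ∈ Finset.range r, (if h : k < r then ((k:ℕ)+1) * f ⟨k,h⟩ else 0) from rfl,
        hsum f, hf]
    · intro k hk
      rw [Finsupp.onFinset_apply, dif_pos (Finset.mem_range.1 hk)]
      exact ⟨f ⟨k, Finset.mem_range.1 hk⟩, rfl⟩
  · rintro ⟨l, hl⟩
    rw [Finset.mem_filter, Finset.mem_finsuppAntidiag] at hl
    ext k
    simp only [Finsupp.onFinset_apply]
    by_cases h : k < r
    · rw [dif_pos h]
      exact Nat.mul_div_cancel' (hl.2 k (Finset.mem_range.2 h))
    · rw [dif_neg h]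
      by_contra hne
      exact h (Finset.mem_range.1 (hl.1.2 (Finsupp.mem_support_iff.2 (fun h0 => hne h0.symm))))
  · rintro ⟨f, hf⟩
    ext i
    simp only [Finsupp.onFinset_apply, dif_pos i.2]
    rw [Nat.mul_div_cancel_left _ (Nat.succ_pos _)]


private def Tsum {r : ℕ} (f : Fin r → ℕ) (k : ℕ) : ℕ :=
  ∑ j ∈ Finset.univ.filter (fun j : Fin r => k ≤ (j : ℕ)), f j

private lemma Tsum_rec {r : ℕ} (f : Fin r → ℕ) (k : ℕ) (hk : k < r) :
    Tsum f k = f ⟨k, hk⟩ + Tsum f (k + 1) := by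
  unfold Tsum
  have : Finset.univ.filter (fun j : Fin r => k ≤ (j : ℕ)) =
      insert ⟨k, hk⟩ (Finset.univ.filter (fun j : Fin r => k + 1 ≤ (j : ℕ))) := by
    ext j
    simp only [Finset.mem_filter, Finset.mem_univ, true_and, Finset.mem_insert, Fin.ext_iff]
    omega
  rw [this, Finset.sum_insert (by simp)]

private lemma Tsum_top {r : ℕ} (f : Fin r → ℕ) (k : ℕ) (hk : r ≤ k) : Tsum f k = 0 := by
  unfold Tsum
  rw [Finset.sum_eq_zero_iff]
  intro j hj
  simp only [Finset.mem_filter] at hj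
  omega

private lemma Tsum_total {r : ℕ} (f : Fin r → ℕ) :
    ∑ k ∈ Finset.range r, Tsum f k = ∑ i : Fin r, ((i : ℕ) + 1) * f i := by
  unfold Tsum
  simp_rw [Finset.sum_filter]
  rw [Finset.sum_comm]
  apply Finset.sum_congr rfl
  intro j _
  rw [← Finset.sum_filter]
  have : (Finset.range r).filter (fun k => k ≤ (j : ℕ)) = Finset.range ((j : ℕ) + 1) := by
    ext k; simp only [Finset.mem_filter, Finset.mem_range]; omega
  rw [this, Finset.sum_const, Finset.card_range, smul_eq_mul]

private lemma stair_sum_range : ∀ r : ℕ, ∑ x ∈ Finset.range r, (2 * (r - 1 - x) + 1) = r ^ 2 := by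
  intro r
  induction r with
  | zero => rfl
  | succ n ih =>
    rw [Finset.sum_range_succ]
    have h2 : ∀ x ∈ Finset.range n, 2 * (n + 1 - 1 - x) + 1 = (2 * (n - 1 - x) + 1) + 2 := by
      intro x hx; rw [Finset.mem_range] at hx; omega
    rw [Finset.sum_congr rfl h2, Finset.sum_add_distrib, ih, Finset.sum_const,
      Finset.card_range, smul_eq_mul]
    have h3 : n + 1 - 1 - n = 0 := by omega
    rw [h3]; ring

private lemma stair_sum (r : ℕ) : ∑ i : Fin r, (2 * (r - 1 - (i : ℕ)) + 1) = r ^ 2 := by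
  rw [Finset.sum_fin_eq_sum_range]
  have : ∀ k ∈ Finset.range r, (if h : k < r then 2 * (r - 1 - k) + 1 else 0) =
      2 * (r - 1 - k) + 1 := fun k hk => dif_pos (Finset.mem_range.1 hk)
  rw [Finset.sum_congr rfl this, stair_sum_range]

private def Gmap {r : ℕ} (f : Fin r → ℕ) (i : Fin r) : ℕ :=
  Tsum f (i : ℕ) + (2 * (r - 1 - (i : ℕ)) + 1)

private lemma Gmap_one {r : ℕ} (f : Fin r → ℕ) (i : Fin r) : 1 ≤ Gmap f i := by
  unfold Gmap; omega

private lemma Gmap_gap {r : ℕ} (f : Fin r → ℕ) (i : Fin r) (h : (i : ℕ) + 1 < r) :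
    Gmap f ⟨(i : ℕ) + 1, h⟩ + 2 ≤ Gmap f i := by
  unfold Gmap
  have h1 := Tsum_rec f (i : ℕ) i.2
  rw [Fin.eta] at h1
  simp only [Fin.val_mk]
  omega

private lemma Gmap_sum {r m : ℕ} (f : Fin r → ℕ) (hf : ∑ i : Fin r, ((i : ℕ) + 1) * f i = m) :
    ∑ i, Gmap f i = m + r ^ 2 := by
  unfold Gmap
  rw [Finset.sum_add_distrib, stair_sum,
    Fin.sum_univ_eq_sum_range (fun k => Tsum f k) r, Tsum_total, hf]

private lemma card_gap (r m : ℕ) :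
    Nat.card {f : Fin r → ℕ // ∑ i : Fin r, ((i : ℕ) + 1) * f i = m} =
    Nat.card {g : Fin r → ℕ //
      (∀ i : Fin r, 1 ≤ g i) ∧
      (∀ i : Fin r, ∀ h : (i : ℕ) + 1 < r, g ⟨(i : ℕ) + 1, h⟩ + 2 ≤ g i) ∧
      ∑ i, g i = m + r ^ 2} := by
  apply Nat.card_eq_of_bijective
    (fun f => ⟨Gmap f.1, Gmap_one f.1, Gmap_gap f.1, Gmap_sum f.1 f.2⟩)
  constructor
  · -- injective
    rintro ⟨f, hf⟩ ⟨g, hg⟩ hfg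
    have heq : ∀ i : Fin r, Gmap f i = Gmap g i :=
      fun i => congrFun (congrArg Subtype.val hfg) i
    have hT : ∀ k : ℕ, Tsum f k = Tsum g k := by
      intro k
      by_cases hk : k < r
      · have := heq ⟨k, hk⟩
        unfold Gmap at this
        simp only [Fin.val_mk] at this
        omega
      · rw [Tsum_top f k (by omega), Tsum_top g k (by omega)]
    apply Subtype.ext
    funext i
    show f i = g i
    have h1 := Tsum_rec f (i : ℕ) i.2
    have h2 := Tsum_rec g (i : ℕ) i.2
    have h3 := hT (i : ℕ)
    have h4 := hT ((i : ℕ) + 1)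
    rw [Fin.eta] at h1 h2
    omega
  · -- surjective
    rintro ⟨g, hg1, hg2, hg3⟩
    set f : Fin r → ℕ := fun i =>
      if h : (i : ℕ) + 1 < r then g i - g ⟨(i : ℕ) + 1, h⟩ - 2 else g i - 1 with hfdef
    have key : ∀ j : ℕ, ∀ k : ℕ, ∀ hk : k < r, r - k ≤ j →
        Tsum f k + (2 * (r - 1 - k) + 1) = g ⟨k, hk⟩ := by
      intro j
      induction j with
      | zero => intro k hk hj; omega
      | succ j ih =>
        intro k hk hj
        have hrec := Tsum_rec f k hk
        by_cases hk1 : k + 1 < r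
        · have hfk : f ⟨k, hk⟩ = g ⟨k, hk⟩ - g ⟨k + 1, hk1⟩ - 2 := by
            rw [hfdef]; exact dif_pos hk1
          have hih := ih (k + 1) hk1 (by omega)
          have hgap : g ⟨k + 1, hk1⟩ + 2 ≤ g ⟨k, hk⟩ := hg2 ⟨k, hk⟩ hk1
          omega
        · have hfk : f ⟨k, hk⟩ = g ⟨k, hk⟩ - 1 := by
            rw [hfdef]; exact dif_neg hk1
          have htop := Tsum_top f (k + 1) (by omega)
          have h1 := hg1 ⟨k, hk⟩
          omega
    have hkey : ∀ i : Fin r, Gmap f i = g i := by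
      intro i
      have := key (r - (i : ℕ)) (i : ℕ) i.2 le_rfl
      rw [Fin.eta] at this
      exact this
    have hsum : ∑ i : Fin r, ((i : ℕ) + 1) * f i = m := by
      have h1 : ∑ i, Gmap f i = m + r ^ 2 := by
        rw [Finset.sum_congr rfl (fun i _ => hkey i), hg3]
      unfold Gmap at h1
      rw [Finset.sum_add_distrib, stair_sum,
        Fin.sum_univ_eq_sum_range (fun k => Tsum f k) r, Tsum_total] at h1
      omega
    exact ⟨⟨f, hsum⟩, Subtype.ext (funext fun i => hkey i)⟩


private lemma card_subtype_prod {α β : Type*} (Q : β → Prop) :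
    Nat.card {p : α × β // Q p.2} = Nat.card α * Nat.card {b : β // Q b} := by
  rw [← Nat.card_prod]
  apply Nat.card_congr
  exact { toFun := fun p => (p.1.1, ⟨p.1.2, p.2⟩)
          invFun := fun q => ⟨(q.1, q.2.1), q.2.2⟩
          left_inv := fun ⟨⟨a, b⟩, h⟩ => rfl
          right_inv := fun ⟨a, ⟨b, h⟩⟩ => rfl }

private lemma gap_lower {r : ℕ} (g : Fin r → ℕ) (hg1 : ∀ i : Fin r, 1 ≤ g i)
    (hg2 : ∀ i : Fin r, ∀ h : (i : ℕ) + 1 < r, g ⟨(i : ℕ) + 1, h⟩ + 2 ≤ g i) :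
    ∀ j : ℕ, ∀ k : ℕ, ∀ hk : k < r, r - k ≤ j → 2 * (r - 1 - k) + 1 ≤ g ⟨k, hk⟩ := by
  intro j
  induction j with
  | zero => intro k hk hj; omega
  | succ j ih =>
    intro k hk hj
    by_cases hk1 : k + 1 < r
    · have hih := ih (k + 1) hk1 (by omega)
      have hgap : g ⟨k + 1, hk1⟩ + 2 ≤ g ⟨k, hk⟩ := hg2 ⟨k, hk⟩ hk1
      omega
    · have := hg1 ⟨k, hk⟩
      omega

private def Fset (c n r : ℕ) : Type :=
  {p : (Fin r → Fin c) × (Fin r → ℕ) //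
    (∀ i : Fin r, 1 ≤ p.2 i) ∧
    (∀ i : Fin r, ∀ h : (i : ℕ) + 1 < r, p.2 ⟨(i : ℕ) + 1, h⟩ + 2 ≤ p.2 i) ∧
    ∑ i, p.2 i = n}

private lemma Fset_le {c n r : ℕ} (x : Fset c n r) : r ≤ n := by
  obtain ⟨⟨a, g⟩, h1, h2, h3⟩ := x
  have hr2 : r ^ 2 ≤ n := by
    have hst : ∀ i : Fin r, 2 * (r - 1 - (i : ℕ)) + 1 ≤ g i := by
      intro i
      have := gap_lower g h1 h2 (r - (i : ℕ)) (i : ℕ) i.2 le_rfl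
      rwa [Fin.eta] at this
    calc r ^ 2 = ∑ i : Fin r, (2 * (r - 1 - (i : ℕ)) + 1) := (stair_sum r).symm
      _ ≤ ∑ i, g i := Finset.sum_le_sum fun i _ => hst i
      _ = n := h3
  nlinarith [sq_nonneg r]

private lemma Fset_finite (c n r : ℕ) : Finite (Fset c n r) := by
  apply Finite.of_injective (f := fun x : Fset c n r =>
    ((x.1.1, fun i => (⟨x.1.2 i, by
      have h3 := x.2.2.2
      have := Finset.single_le_sum (f := x.1.2) (fun j _ => Nat.zero_le _) (Finset.mem_univ i)
      omega⟩ : Fin (n + 1))) : (Fin r → Fin c) × (Fin r → Fin (n + 1))))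
  rintro ⟨⟨a, g⟩, ha⟩ ⟨⟨b, k⟩, hb⟩ h
  simp only [Prod.mk.injEq] at h
  apply Subtype.ext
  simp only [Prod.mk.injEq]
  refine ⟨h.1, funext fun i => ?_⟩
  have := congrFun h.2 i
  simpa [Fin.ext_iff] using this

private lemma Fset_empty {c n r : ℕ} (hr : n + 1 ≤ r) : IsEmpty (Fset c n r) :=
  ⟨fun x => by have := Fset_le x; omega⟩

private lemma coeff_term (c n r : ℕ) :
    (PowerSeries.coeff (R := ℚ) n)
        (PowerSeries.C (R := ℚ) ((c : ℚ) ^ r) * PowerSeries.X ^ (r ^ 2) *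
          ∏ k ∈ Finset.range r, (1 - (PowerSeries.X : PowerSeries ℚ) ^ (k + 1))⁻¹) =
      (Nat.card (Fset c n r) : ℚ) := by
  rw [mul_right_comm, PowerSeries.coeff_mul_X_pow']
  by_cases h : r ^ 2 ≤ n
  · rw [if_pos h, coeff_C_mul, coeff_prod_inv, card_gap r (n - r ^ 2)]
    rw [show n - r ^ 2 + r ^ 2 = n from by omega]
    unfold Fset
    rw [card_subtype_prod (α := Fin r → Fin c) (Q := fun g : Fin r → ℕ =>
      (∀ i : Fin r, 1 ≤ g i) ∧
      (∀ i : Fin r, ∀ h : (i : ℕ) + 1 < r, g ⟨(i : ℕ) + 1, h⟩ + 2 ≤ g i) ∧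
      ∑ i, g i = n)]
    have : Nat.card (Fin r → Fin c) = c ^ r := by
      simp [Nat.card_eq_fintype_card]
    rw [this]
    push_cast
    ring
  · rw [if_neg h]
    have : IsEmpty (Fset c n r) := ⟨fun x => by
      obtain ⟨⟨a, g⟩, h1, h2, h3⟩ := x
      have hst : ∀ i : Fin r, 2 * (r - 1 - (i : ℕ)) + 1 ≤ g i := by
        intro i
        have := gap_lower g h1 h2 (r - (i : ℕ)) (i : ℕ) i.2 le_rfl
        rwa [Fin.eta] at this
      have : r ^ 2 ≤ n := by
        calc r ^ 2 = ∑ i : Fin r, (2 * (r - 1 - (i : ℕ)) + 1) := (stair_sum r).symm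
          _ ≤ ∑ i, g i := Finset.sum_le_sum fun i _ => hst i
          _ = n := h3
      omega⟩
    rw [Nat.card_of_isEmpty]
    norm_num

/-- The coefficient of `x^n` in `c^r · x^(r²) / ((1−x)(1−x²)⋯(1−x^r))` counts
`c`-colored gap-`2` partitions of `n` into exactly `r` parts: pairs of a
partition `n₁ > ... > n_r ≥ 1` with consecutive differences at least `2`
summing to `n`, together with a labeling of the `r` parts by `{1, ..., c}`.
Consequently `Σ_{r≥0} c^r x^(r²)/((x;x)_r)` is the generating function for all
`c`-colored gap-`2` partitions (the empty partition counted once for `r = 0`). -/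
theorem colored_rr_coefficient (c : ℕ) (hc : 1 ≤ c) (n : ℕ) :
    (∀ r : ℕ, 1 ≤ r →
      (PowerSeries.coeff (R := ℚ) n)
          (PowerSeries.C (R := ℚ) ((c : ℚ) ^ r) * PowerSeries.X ^ (r ^ 2) *
            ∏ k ∈ Finset.range r, (1 - (PowerSeries.X : PowerSeries ℚ) ^ (k + 1))⁻¹) =
        (Nat.card {p : (Fin r → Fin c) × (Fin r → ℕ) //
            (∀ i : Fin r, 1 ≤ p.2 i) ∧
            (∀ i : Fin r, ∀ h : (i : ℕ) + 1 < r, p.2 ⟨(i : ℕ) + 1, h⟩ + 2 ≤ p.2 i) ∧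
            ∑ i, p.2 i = n} : ℚ)) ∧
    (∑ᶠ r : ℕ,
        (PowerSeries.coeff (R := ℚ) n)
          (PowerSeries.C (R := ℚ) ((c : ℚ) ^ r) * PowerSeries.X ^ (r ^ 2) *
            ∏ k ∈ Finset.range r, (1 - (PowerSeries.X : PowerSeries ℚ) ^ (k + 1))⁻¹)) =
      (Nat.card {p : Σ r : ℕ, (Fin r → Fin c) × (Fin r → ℕ) //
          (∀ i : Fin p.1, 1 ≤ p.2.2 i) ∧
          (∀ i : Fin p.1, ∀ h : (i : ℕ) + 1 < p.1, p.2.2 ⟨(i : ℕ) + 1, h⟩ + 2 ≤ p.2.2 i) ∧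
          ∑ i, p.2.2 i = n} : ℚ) := by
  constructor
  · exact fun r _ => coeff_term c n r
  · letI : ∀ r : ℕ, Finite (Fset c n r) := Fset_finite c n
    letI : ∀ i : Fin (n + 1), Fintype (Fset c n (i : ℕ)) := fun i => Fintype.ofFinite _
    have hbound : ∀ x : Σ r : ℕ, Fset c n r, x.1 < n + 1 := by
      intro x
      by_contra hx
      exact (Fset_empty (c := c) (by omega)).false x.2
    have e1 : {p : Σ r : ℕ, (Fin r → Fin c) × (Fin r → ℕ) //
          (∀ i : Fin p.1, 1 ≤ p.2.2 i) ∧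
          (∀ i : Fin p.1, ∀ h : (i : ℕ) + 1 < p.1, p.2.2 ⟨(i : ℕ) + 1, h⟩ + 2 ≤ p.2.2 i) ∧
          ∑ i, p.2.2 i = n} ≃ Σ r : ℕ, Fset c n r :=
      { toFun := fun x => ⟨x.1.1, ⟨x.1.2, x.2⟩⟩
        invFun := fun y => ⟨⟨y.1, y.2.1⟩, y.2.2⟩
        left_inv := fun ⟨⟨r, q⟩, h⟩ => rfl
        right_inv := fun ⟨r, q, h⟩ => rfl }
    have e2 : (Σ r : ℕ, Fset c n r) ≃ Σ i : Fin (n + 1), Fset c n (i : ℕ) :=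
      { toFun := fun x => ⟨⟨x.1, hbound x⟩, x.2⟩
        invFun := fun y => ⟨(y.1 : ℕ), y.2⟩
        left_inv := fun x => rfl
        right_inv := fun y => rfl }
    have hcard : Nat.card {p : Σ r : ℕ, (Fin r → Fin c) × (Fin r → ℕ) //
          (∀ i : Fin p.1, 1 ≤ p.2.2 i) ∧
          (∀ i : Fin p.1, ∀ h : (i : ℕ) + 1 < p.1, p.2.2 ⟨(i : ℕ) + 1, h⟩ + 2 ≤ p.2.2 i) ∧
          ∑ i, p.2.2 i = n} = ∑ r ∈ Finset.range (n + 1), Nat.card (Fset c n r) := by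
      rw [Nat.card_congr (e1.trans e2), Nat.card_eq_fintype_card, Fintype.card_sigma]
      rw [← Fin.sum_univ_eq_sum_range (fun r => Nat.card (Fset c n r)) (n + 1)]
      exact Finset.sum_congr rfl fun i _ => (Nat.card_eq_fintype_card).symm
    rw [hcard]
    have hsupp : (Function.support fun r =>
        (PowerSeries.coeff (R := ℚ) n)
          (PowerSeries.C (R := ℚ) ((c : ℚ) ^ r) * PowerSeries.X ^ (r ^ 2) *
            ∏ k ∈ Finset.range r, (1 - (PowerSeries.X : PowerSeries ℚ) ^ (k + 1))⁻¹)) ⊆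
        ↑(Finset.range (n + 1)) := by
      intro r hr
      simp only [Function.mem_support] at hr
      rw [coeff_term c n r] at hr
      simp only [Finset.coe_range, Set.mem_Iio]
      by_contra hx
      haveI := Fset_empty (c := c) (n := n) (r := r) (by omega)
      rw [Nat.card_of_isEmpty] at hr
      simp at hr
    rw [finsum_eq_sum_of_support_subset _ hsupp]
    push_cast
    exact Finset.sum_congr rfl fun r _ => coeff_term c n r
end

section
/- In the setting of Lemma 2.5 (Li's compatibility induction): suppose A ∈ Hom(L, L((z1))((z2, ..., z_{m+1}))) and B ∈ Hom(L, L((z2))((z1, z3, ..., z_{m+1}))) are equal as series (A = B in Hom(L, L[[z1^{±1}, ..., z_{m+1}^{±1}]])). Then A = B lies in Hom(L, L((z1, z2, ..., z_{m+1}))); that is, an operator-valued series that is simultaneously lower truncated in the iterated sense from two different variable orders with disjoint leading variables is lower truncated jointly in all variables. -/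
/-- A multivariable operator-valued series (modeled by its coefficient
function `f : (Fin n → ℤ) → M`) lies in `L((z_k))((other variables))` iff:
the exponents of the variables other than `z_k` are uniformly bounded below,
and for each fixed choice of those exponents the exponent of `z_k` is bounded
below. -/
def IterTrunc {n : ℕ} {M : Type*} [AddCommGroup M] (k : Fin n)
    (f : (Fin n → ℤ) → M) : Prop :=
  (∃ N : ℤ, ∀ e : Fin n → ℤ, (∃ i, i ≠ k ∧ e i < N) → f e = 0) ∧
  ∀ e : Fin n → ℤ, ∃ N : ℤ, ∀ e' : Fin n → ℤ,
    (∀ i, i ≠ k → e' i = e i) → e' k < N → f e' = 0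

/-- Li's compatibility induction step: a series in the variables
`z₁, ..., z_{m+1}` (with `m ≥ 1`) that lies simultaneously in
`Hom(L, L((z₁))((z₂, ..., z_{m+1})))` and in
`Hom(L, L((z₂))((z₁, z₃, ..., z_{m+1})))` lies in
`Hom(L, L((z₁, z₂, ..., z_{m+1})))`, i.e. is jointly lower truncated in all
variables. -/
theorem joint_truncation (m : ℕ) (hm : 1 ≤ m)
    (M : Type*) [AddCommGroup M]
    (f : (Fin (m + 1) → ℤ) → M)
    (h1 : IterTrunc (0 : Fin (m + 1)) f)
    (h2 : IterTrunc (1 : Fin (m + 1)) f) :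
    ∃ N : ℤ, ∀ e : Fin (m + 1) → ℤ, (∃ i, e i < N) → f e = 0 := by
  obtain ⟨N1, hN1⟩ := h1.1
  obtain ⟨N2, hN2⟩ := h2.1
  refine ⟨min N1 N2, fun e ⟨i, hi⟩ => ?_⟩
  by_cases h : i = (0 : Fin (m + 1))
  · refine hN2 e ⟨i, ?_, lt_of_lt_of_le hi (min_le_right _ _)⟩
    subst h
    have : (0 : Fin (m + 1)).val ≠ (1 : Fin (m + 1)).val := by
      simp [Fin.val_one', Nat.mod_eq_of_lt (by omega : 1 < m + 1)]
    exact fun hc => this (congrArg Fin.val hc)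
  · exact hN1 e ⟨i, h, lt_of_lt_of_le hi (min_le_left _ _)⟩
end

section
/- Independence of the defining polynomial (Proposition 2.8, abstracted): let L be a vector space over 𝔽 ⊇ ℂ(q), let F(z1, z) ∈ Hom(L, L[[z1^{±1}, z^{±1}]]), and let p1, p2 ∈ 𝔽(q)[w] satisfy p1(1) = p2(1) = 1, p_k(q^n) ≠ 0 for all n ≥ 0, and p_k(z/z1)·F(z1, z) ∈ Hom(L, L((z1, z))) for k = 1, 2. Then the substituted series satisfy lim_{z1→z} p1(z/z1) F(z1,z) = lim_{z1→z} p2(z/z1) F(z1,z), where lim_{z1→z} denotes substitution z1 = z (well defined on Hom(L, L((z1,z)))). -/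
/-- The indeterminate `q`, realized as the generator of the field `ℂ(q)`. -/
noncomputable def qq : RatFunc ℂ := RatFunc.X

/- Series `F(z1, z) ∈ Hom(L, L[[z1^{±1}, z^{±1}]])` are modeled by coefficient
functions `f : ℤ → ℤ → M` (first index for `z1`, second for `z`). -/

/-- Multiplication by `p(z/z1)` for a polynomial `p`: since
`p(z/z1) = Σ_k c_k z^k z1^(−k)`, the coefficient of `z1^i z^j` in
`p(z/z1)·F` is `Σ_k c_k • F_{(i+k, j−k)}`. -/
noncomputable def pmul {K : Type*} [Field K] {M : Type*} [AddCommGroup M]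
    [Module K M] (p : Polynomial K) (f : ℤ → ℤ → M) : ℤ → ℤ → M :=
  fun i j => ∑ k ∈ Finset.range (p.natDegree + 1),
    p.coeff k • f (i + k) (j - k)


/-- One-dimensional version of `pmul` along a diagonal: apply `p` of the shift. -/
noncomputable def opS {K : Type*} [Field K] {M : Type*} [AddCommGroup M]
    [Module K M] (p : Polynomial K) (h : ℤ → M) : ℤ → M :=
  fun i => ∑ k ∈ Finset.range (p.natDegree + 1), p.coeff k • h (i + k)

lemma opS_comm {K : Type*} [Field K] {M : Type*} [AddCommGroup M]
    [Module K M] (p1 p2 : Polynomial K) (g : ℤ → M) :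
    opS p1 (opS p2 g) = opS p2 (opS p1 g) := by
  funext i
  unfold opS
  simp only [Finset.smul_sum, smul_smul]
  rw [Finset.sum_comm]
  refine Finset.sum_congr rfl fun l _ => Finset.sum_congr rfl fun k _ => ?_
  rw [mul_comm, add_right_comm]

lemma finsum_opS {K : Type*} [Field K] {M : Type*} [AddCommGroup M]
    [Module K M] (p : Polynomial K) (h : ℤ → M) (a b : ℤ)
    (hs : Function.support h ⊆ Set.Icc a b) :
    (∑ᶠ i : ℤ, opS p h i) = p.eval 1 • ∑ᶠ i : ℤ, h i := by
  set D := p.natDegree with hD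
  have hsub : Function.support (opS p h) ⊆ (Finset.Icc (a - D) b : Finset ℤ) := by
    intro i hi
    simp only [Function.mem_support] at hi
    by_contra hiT
    apply hi
    unfold opS
    refine Finset.sum_eq_zero fun k hk => ?_
    rcases eq_or_ne (h (i + k)) 0 with h0 | h0
    · rw [h0, smul_zero]
    · exfalso
      have := hs h0
      simp only [Set.mem_Icc] at this
      simp only [Finset.coe_Icc, Set.mem_Icc, not_and_or, not_le, Finset.mem_coe,
        Finset.mem_Icc] at hiT
      have hk' : (k : ℤ) ≤ D := by
        have := Finset.mem_range.mp hk; omega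
      omega
  have hsub2 : ∀ k ∈ Finset.range (D + 1),
      Function.support (fun i => h (i + k)) ⊆ (Finset.Icc (a - D) b : Finset ℤ) := by
    intro k hk i hi
    simp only [Function.mem_support] at hi
    have := hs hi
    simp only [Set.mem_Icc] at this
    have hk' : (k : ℤ) ≤ D := by have := Finset.mem_range.mp hk; omega
    simp only [Finset.coe_Icc, Set.mem_Icc]
    omega
  have hsubh : Function.support h ⊆ (Finset.Icc (a - D) b : Finset ℤ) := by
    intro i hi
    have := hs hi
    simp only [Set.mem_Icc] at this
    simp only [Finset.coe_Icc, Set.mem_Icc]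
    omega
  rw [finsum_eq_sum_of_support_subset _ hsub]
  unfold opS
  rw [Finset.sum_comm]
  have key : ∀ k ∈ Finset.range (D + 1),
      (∑ i ∈ Finset.Icc (a - D) b, p.coeff k • h (i + k))
        = p.coeff k • ∑ᶠ i : ℤ, h i := by
    intro k hk
    rw [← Finset.smul_sum]
    congr 1
    rw [← finsum_eq_sum_of_support_subset _ (hsub2 k hk)]
    exact finsum_comp_equiv (Equiv.addRight (k : ℤ))
  rw [Finset.sum_congr rfl key, ← Finset.sum_smul]
  congr 1
  rw [Polynomial.eval_eq_sum_range]
  simp [hD]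

theorem polynomial_independence'
    (K : Type*) [Field K]
    (M : Type*) [AddCommGroup M] [Module K M]
    (f : ℤ → ℤ → M) (p1 p2 : Polynomial K)
    (h11 : p1.eval 1 = 1)
    (h21 : p2.eval 1 = 1)
    (ht1 : ∃ N : ℤ, ∀ i j : ℤ, (i < N ∨ j < N) → pmul p1 f i j = 0)
    (ht2 : ∃ N : ℤ, ∀ i j : ℤ, (i < N ∨ j < N) → pmul p2 f i j = 0) :
    ∀ n : ℤ, (∑ᶠ i : ℤ, pmul p1 f i (n - i)) = ∑ᶠ i : ℤ, pmul p2 f i (n - i) := by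
  intro n
  obtain ⟨N1, hN1⟩ := ht1
  obtain ⟨N2, hN2⟩ := ht2
  set g : ℤ → M := fun i => f i (n - i) with hg
  have hdiag : ∀ (p : Polynomial K) (i : ℤ), pmul p f i (n - i) = opS p g i := by
    intro p i
    unfold pmul opS
    refine Finset.sum_congr rfl fun k _ => ?_
    have : n - i - (k : ℤ) = n - (i + k) := by ring
    rw [this]
  have hsupp1 : Function.support (opS p1 g) ⊆ Set.Icc N1 (n - N1) := by
    intro i hi
    simp only [Function.mem_support, ← hdiag] at hi
    by_contra hc
    simp only [Set.mem_Icc, not_and_or, not_le] at hc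
    exact hi (hN1 i (n - i) (by omega))
  have hsupp2 : Function.support (opS p2 g) ⊆ Set.Icc N2 (n - N2) := by
    intro i hi
    simp only [Function.mem_support, ← hdiag] at hi
    by_contra hc
    simp only [Set.mem_Icc, not_and_or, not_le] at hc
    exact hi (hN2 i (n - i) (by omega))
  calc (∑ᶠ i : ℤ, pmul p1 f i (n - i))
      = ∑ᶠ i : ℤ, opS p1 g i := finsum_congr (hdiag p1)
    _ = p2.eval 1 • ∑ᶠ i : ℤ, opS p1 g i := by rw [h21, one_smul]
    _ = ∑ᶠ i : ℤ, opS p2 (opS p1 g) i := (finsum_opS p2 _ _ _ hsupp1).symm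
    _ = ∑ᶠ i : ℤ, opS p1 (opS p2 g) i := by rw [opS_comm]
    _ = p1.eval 1 • ∑ᶠ i : ℤ, opS p2 g i := finsum_opS p1 _ _ _ hsupp2
    _ = ∑ᶠ i : ℤ, opS p2 g i := by rw [h11, one_smul]
    _ = ∑ᶠ i : ℤ, pmul p2 f i (n - i) := (finsum_congr (hdiag p2)).symm

/-- Independence of the defining polynomial (Proposition 2.8, abstracted):
if `p₁, p₂ ∈ 𝔽(q)[w]` satisfy `pₖ(1) = 1`, `pₖ(q^n) ≠ 0` for all `n ≥ 0`, and
`pₖ(z/z1)·F(z1, z) ∈ Hom(L, L((z1, z)))` (joint lower truncation), then the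
substitutions `z1 = z` agree:
`lim_{z1→z} p₁(z/z1) F(z1,z) = lim_{z1→z} p₂(z/z1) F(z1,z)` (the `n`-th
coefficient of the substituted series is the diagonal sum `Σ_{i+j=n}`). -/
theorem polynomial_independence
    (K : Type*) [Field K] [Algebra (RatFunc ℂ) K]
    (M : Type*) [AddCommGroup M] [Module K M]
    (f : ℤ → ℤ → M) (p1 p2 : Polynomial K)
    (h11 : p1.eval 1 = 1)
    (h12 : ∀ n : ℕ, p1.eval ((algebraMap (RatFunc ℂ) K qq) ^ n) ≠ 0)
    (h21 : p2.eval 1 = 1)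
    (h22 : ∀ n : ℕ, p2.eval ((algebraMap (RatFunc ℂ) K qq) ^ n) ≠ 0)
    (ht1 : ∃ N : ℤ, ∀ i j : ℤ, (i < N ∨ j < N) → pmul p1 f i j = 0)
    (ht2 : ∃ N : ℤ, ∀ i j : ℤ, (i < N ∨ j < N) → pmul p2 f i j = 0) :
    ∀ n : ℤ, (∑ᶠ i : ℤ, pmul p1 f i (n - i)) = ∑ᶠ i : ℤ, pmul p2 f i (n - i) := by
  exact polynomial_independence' K M f p1 p2 h11 h21 ht1 ht2
end
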